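/- arXiv:1805.07626 — 7 statements merged into one kernel-verified Lean document; each statement's English description precedes it below -/
import Mathlib

section
/- Let s > 0 and bounds 0 < u̲ ≤ ū, 0 ≤ v̲ ≤ v̄ satisfy ū·v̲ ≤ s ≤ u̲·v̄. Then the convex hull of the planar set {(u,v) ∈ ℝ² : u·v ≤ s, u̲ ≤ u ≤ ū, v̲ ≤ v ≤ v̄} equals the trapezoid {(u,v) ∈ ℝ² : s·u + u̲·ū·v ≤ s·(u̲ + ū), u̲ ≤ u ≤ ū, v̲ ≤ v ≤ v̄}. -/
/-- The convex hull of the region below the hyperbola u·v = s inside a box equals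
the trapezoid cut out by the chord s·u + u̲·ū·v ≤ s·(u̲ + ū) together with the box. -/
theorem hyperbola_box_convexHull
    (s ul uu vl vu : ℝ) (hs : 0 < s) (hul : 0 < ul) (hu : ul ≤ uu)
    (hvl : 0 ≤ vl) (hv : vl ≤ vu) (h1 : uu * vl ≤ s) (h2 : s ≤ ul * vu) :
    convexHull ℝ
      {p : ℝ × ℝ | p.1 * p.2 ≤ s ∧ ul ≤ p.1 ∧ p.1 ≤ uu ∧ vl ≤ p.2 ∧ p.2 ≤ vu} =
      {p : ℝ × ℝ | s * p.1 + ul * uu * p.2 ≤ s * (ul + uu) ∧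
        ul ≤ p.1 ∧ p.1 ≤ uu ∧ vl ≤ p.2 ∧ p.2 ≤ vu} := by
  have huu : 0 < uu := lt_of_lt_of_le hul hu
  set S : Set (ℝ × ℝ) :=
    {p : ℝ × ℝ | p.1 * p.2 ≤ s ∧ ul ≤ p.1 ∧ p.1 ≤ uu ∧ vl ≤ p.2 ∧ p.2 ≤ vu} with hSdef
  apply Set.Subset.antisymm
  · apply convexHull_min
    · rintro ⟨u, v⟩ ⟨huv, h3, h4, h5, h6⟩
      dsimp only at huv h3 h4 h5 h6 ⊢
      refine ⟨?_, h3, h4, h5, h6⟩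
      have hu0 : 0 < u := lt_of_lt_of_le hul h3
      nlinarith [mul_nonneg hs.le (mul_nonneg (sub_nonneg.2 h3) (sub_nonneg.2 h4)),
        mul_nonneg (mul_pos hul huu).le (sub_nonneg.2 huv), hu0]
    · rintro p hp q hq a b ha hb hab
      obtain ⟨hp1, hp2, hp3, hp4, hp5⟩ := hp
      obtain ⟨hq1, hq2, hq3, hq4, hq5⟩ := hq
      have hb' : b = 1 - a := by linarith
      subst hb'
      simp only [Set.mem_setOf_eq, Prod.fst_add, Prod.snd_add, Prod.smul_fst,
        Prod.smul_snd, smul_eq_mul]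
      have k1 := mul_le_mul_of_nonneg_left hp1 ha
      have k2 := mul_le_mul_of_nonneg_left hq1 hb
      have k3 := mul_le_mul_of_nonneg_left hp2 ha
      have k4 := mul_le_mul_of_nonneg_left hq2 hb
      have k5 := mul_le_mul_of_nonneg_left hp3 ha
      have k6 := mul_le_mul_of_nonneg_left hq3 hb
      have k7 := mul_le_mul_of_nonneg_left hp4 ha
      have k8 := mul_le_mul_of_nonneg_left hq4 hb
      have k9 := mul_le_mul_of_nonneg_left hp5 ha
      have k10 := mul_le_mul_of_nonneg_left hq5 hb
      refine ⟨by linarith [k1, k2], by linarith [k3, k4], by linarith [k5, k6],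
        by linarith [k7, k8], by linarith [k9, k10]⟩
  · rintro ⟨u, v⟩ ⟨hch, h3, h4, h5, h6⟩
    dsimp only at hch h3 h4 h5 h6
    have hAS : ((ul, s / ul) : ℝ × ℝ) ∈ S := by
      refine ⟨le_of_eq (by field_simp), le_refl _, hu, ?_, ?_⟩
      · rw [le_div_iff₀ hul]; nlinarith
      · rw [div_le_iff₀ hul]; nlinarith
    have hBS : ((uu, s / uu) : ℝ × ℝ) ∈ S := by
      refine ⟨le_of_eq (by field_simp), hu, le_refl _, ?_, ?_⟩
      · rw [le_div_iff₀ huu]; nlinarith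
      · rw [div_le_iff₀ huu]; nlinarith
    have hCS : ((u, vl) : ℝ × ℝ) ∈ S := by
      refine ⟨by dsimp only; nlinarith, h3, h4, le_refl _, hv⟩
    rcases eq_or_lt_of_le hu with heq | hlt
    · -- degenerate case ul = uu : the point is already in S
      apply subset_convexHull
      have hu1 : u = ul := le_antisymm (heq ▸ h4) h3
      refine ⟨?_, h3, h4, h5, h6⟩
      dsimp only
      rw [hu1]
      rw [← heq] at hch
      rw [hu1] at hch
      -- hch : s * ul + ul * ul * v ≤ s * (ul + ul), goal : ul * v ≤ s
      have h7 : (ul * v) * ul ≤ s * ul := by nlinarith [hch]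
      exact le_of_mul_le_mul_right h7 hul
    · set t : ℝ := (u - ul) / (uu - ul) with htdef
      have hd : 0 < uu - ul := sub_pos.2 hlt
      have ht0 : 0 ≤ t := div_nonneg (by linarith) hd.le
      have ht1 : t ≤ 1 := by
        rw [div_le_one hd]; linarith
      have hDeq : ((u, (1 - t) * (s / ul) + t * (s / uu)) : ℝ × ℝ) =
          (1 - t) • ((ul, s / ul) : ℝ × ℝ) + t • ((uu, s / uu) : ℝ × ℝ) := by
        apply Prod.ext
        · simp only [Prod.fst_add, Prod.smul_fst, smul_eq_mul]
          have ht' : t * (uu - ul) = u - ul := by rw [htdef]; exact div_mul_cancel₀ _ hd.ne'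
          linarith
        · simp only [Prod.snd_add, Prod.smul_snd, smul_eq_mul]
      set Dv : ℝ := (1 - t) * (s / ul) + t * (s / uu) with hDvdef
      have hDhull : ((u, Dv) : ℝ × ℝ) ∈ convexHull ℝ S := by
        rw [hDeq]
        exact (convex_convexHull ℝ S) (subset_convexHull ℝ S hAS) (subset_convexHull ℝ S hBS)
          (by linarith) ht0 (by ring)
      have hD2 : s * u + ul * uu * Dv = s * (ul + uu) := by
        rw [hDvdef, htdef]
        field_simp
        ring
      have hvD : v ≤ Dv := by
        have h' : ul * uu * v ≤ ul * uu * Dv := by linarith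
        exact le_of_mul_le_mul_left h' (mul_pos hul huu)
      have hvseg : v ∈ segment ℝ vl Dv := by
        rw [segment_eq_Icc (le_trans h5 hvD)]
        exact ⟨h5, hvD⟩
      obtain ⟨a, b, ha, hb, hab, hx⟩ := hvseg
      have hpt : ((u, v) : ℝ × ℝ) = a • ((u, vl) : ℝ × ℝ) + b • ((u, Dv) : ℝ × ℝ) := by
        have e1 : u = a * u + b * u := by rw [← add_mul, hab, one_mul]
        have e2 : v = a * vl + b * Dv := by
          rw [← hx]; simp [smul_eq_mul]
        apply Prod.ext
        · simpa only [Prod.fst_add, Prod.smul_fst, smul_eq_mul] using e1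
        · simpa only [Prod.snd_add, Prod.smul_snd, smul_eq_mul] using e2
      rw [hpt]
      exact (convex_convexHull ℝ S) (subset_convexHull ℝ S hCS) hDhull ha hb hab
end

section
/- Let s > 0 and bounds 0 < u̲ ≤ u ≤ ū, 0 ≤ v̲ ≤ v ≤ v̄ with u·v ≤ s and ū·v̲ ≤ s ≤ u̲·v̄. Then s·u + u̲·ū·v ≤ s·(u̲ + ū). -/
/-- Validity of the chord cut s·u + u̲·ū·v ≤ s·(u̲ + ū) for points in the box
[u̲,ū]×[v̲,v̄] below the hyperbola u·v ≤ s, when ū·v̲ ≤ s ≤ u̲·v̄. -/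
theorem linear_cut_case1
    (s ul uu vl vu u v : ℝ) (hs : 0 < s)
    (h0 : 0 < ul) (hul : ul ≤ u) (huu : u ≤ uu)
    (h0v : 0 ≤ vl) (hvl : vl ≤ v) (hvu : v ≤ vu)
    (huv : u * v ≤ s) (h1 : uu * vl ≤ s) (h2 : s ≤ ul * vu) :
    s * u + ul * uu * v ≤ s * (ul + uu) := by
  have hu : 0 < u := lt_of_lt_of_le h0 hul
  have huu0 : 0 < uu := lt_of_lt_of_le hu huu
  have key : 0 ≤ (u - ul) * (uu - u) * s :=
    mul_nonneg (mul_nonneg (by linarith) (by linarith)) hs.le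
  have h3 : ul * uu * (v * u) ≤ ul * uu * s := by
    apply mul_le_mul_of_nonneg_left _ (by positivity)
    linarith [mul_comm u v]
  nlinarith [mul_pos h0 hu, mul_nonneg (le_of_lt hu) (le_of_lt hs)]
end

section
/- Let R > 0 and f̄ > 0. The convex hull of the planar set {(f,y) ∈ ℝ² : 0 ≤ f ≤ f̄, y ≤ R·f²} equals the set {(f,y) ∈ ℝ² : 0 ≤ f ≤ f̄, y ≤ R·f̄·f}. -/
/-- The convex hull of the reverse-parabola region {(f,y) : 0 ≤ f ≤ f̄, y ≤ R·f²}
equals the region below the chord {(f,y) : 0 ≤ f ≤ f̄, y ≤ R·f̄·f}. -/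
theorem parabola_convexHull (R fb : ℝ) (hR : 0 < R) (hfb : 0 < fb) :
    convexHull ℝ
      {p : ℝ × ℝ | 0 ≤ p.1 ∧ p.1 ≤ fb ∧ p.2 ≤ R * p.1 ^ 2} =
      {p : ℝ × ℝ | 0 ≤ p.1 ∧ p.1 ≤ fb ∧ p.2 ≤ R * fb * p.1} := by
  apply Set.Subset.antisymm
  · apply convexHull_min
    · rintro ⟨f, y⟩ ⟨h1, h2, h3⟩
      simp only at h1 h2 h3 ⊢
      refine ⟨h1, h2, ?_⟩
      nlinarith [mul_nonneg (mul_nonneg hR.le h1) (sub_nonneg.mpr h2)]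
    · rintro ⟨f1, y1⟩ ⟨a1, b1, c1⟩ ⟨f2, y2⟩ ⟨a2, b2, c2⟩ s t hs ht hst
      refine ⟨?_, ?_, ?_⟩ <;>
        simp only [Prod.smul_mk, Prod.mk_add_mk, smul_eq_mul] <;> nlinarith
  · rintro ⟨f, y⟩ ⟨h1, h2, h3⟩
    rcases eq_or_lt_of_le h2 with hf | hf
    · apply subset_convexHull
      simp only at h1 h2 h3 hf ⊢
      subst hf
      exact ⟨h1, h2, by nlinarith⟩
    · set t := f / fb with ht
      have ht0 : 0 ≤ t := div_nonneg h1 hfb.le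
      have ht1 : t < 1 := (div_lt_one hfb).mpr hf
      have hq0 : ((0 : ℝ), (y - t * (R * fb ^ 2)) / (1 - t)) ∈
          {p : ℝ × ℝ | 0 ≤ p.1 ∧ p.1 ≤ fb ∧ p.2 ≤ R * p.1 ^ 2} := by
        refine ⟨le_refl 0, hfb.le, ?_⟩
        have hy : y - t * (R * fb ^ 2) ≤ 0 := by
          have : t * (R * fb ^ 2) = R * fb * f := by
            field_simp [ht]; rw [ht]; exact div_mul_cancel₀ f hfb.ne'
          nlinarith
        simp only
        have := div_nonpos_of_nonpos_of_nonneg hy (by linarith : (0:ℝ) ≤ 1 - t)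
        nlinarith
      have hq1 : ((fb : ℝ), R * fb ^ 2) ∈
          {p : ℝ × ℝ | 0 ≤ p.1 ∧ p.1 ≤ fb ∧ p.2 ≤ R * fb ^ 2} := by
        exact ⟨hfb.le, le_refl fb, le_refl _⟩
      have hq1' : ((fb : ℝ), R * fb ^ 2) ∈
          {p : ℝ × ℝ | 0 ≤ p.1 ∧ p.1 ≤ fb ∧ p.2 ≤ R * p.1 ^ 2} := ⟨hfb.le, le_refl fb, le_refl _⟩
      have hseg : (f, y) ∈ segment ℝ ((0 : ℝ), (y - t * (R * fb ^ 2)) / (1 - t))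
          ((fb : ℝ), R * fb ^ 2) := by
        refine ⟨1 - t, t, by linarith, ht0, by ring, ?_⟩
        have h1t : (1 : ℝ) - t ≠ 0 := by linarith
        simp only [Prod.smul_mk, Prod.mk_add_mk, smul_eq_mul, Prod.mk.injEq]
        constructor
        · field_simp [ht]; rw [ht, mul_zero, zero_add]; exact div_mul_cancel₀ f hfb.ne'
        · field_simp; ring
      exact segment_subset_convexHull hq0 hq1' hseg
end

section
/- Let a > 0, b ≥ 0, η > 0, and f̄ > 0. The convex hull of the planar curve segment {(f,p) ∈ ℝ² : 0 ≤ f ≤ f̄, η·p = a·f² + b·f} equals the region {(f,p) ∈ ℝ² : 0 ≤ f ≤ f̄, a·f² + b·f ≤ η·p ≤ (a·f̄ + b)·f}. -/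
/-- The convex hull of the pump power–flow curve {(f,p) : 0 ≤ f ≤ f̄, η·p = a·f² + b·f}
is the region between the parabola and its chord from (0,0) to (f̄, a·f̄² + b·f̄). -/
theorem pump_curve_convexHull (a b eta fb : ℝ) (ha : 0 < a) (hb : 0 ≤ b)
    (heta : 0 < eta) (hfb : 0 < fb) :
    convexHull ℝ
      {q : ℝ × ℝ | 0 ≤ q.1 ∧ q.1 ≤ fb ∧ eta * q.2 = a * q.1 ^ 2 + b * q.1} =
      {q : ℝ × ℝ | 0 ≤ q.1 ∧ q.1 ≤ fb ∧
        a * q.1 ^ 2 + b * q.1 ≤ eta * q.2 ∧ eta * q.2 ≤ (a * fb + b) * q.1} := by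
  set S : Set (ℝ × ℝ) :=
    {q : ℝ × ℝ | 0 ≤ q.1 ∧ q.1 ≤ fb ∧ eta * q.2 = a * q.1 ^ 2 + b * q.1} with hS
  apply Set.Subset.antisymm
  · apply convexHull_min
    · rintro ⟨f, p⟩ ⟨h0, h1, h2⟩
      refine ⟨h0, h1, le_of_eq h2.symm, ?_⟩
      simp only at *
      nlinarith [mul_nonneg (mul_nonneg ha.le h0) (sub_nonneg.mpr h1)]
    · rintro ⟨x1, x2⟩ ⟨hx0, hx1, hx2, hx3⟩ ⟨y1, y2⟩ ⟨hy0, hy1, hy2, hy3⟩ s t hs ht hst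
      simp only [Set.mem_setOf_eq, Prod.smul_mk, Prod.mk_add_mk, smul_eq_mul] at *
      refine ⟨by nlinarith, by nlinarith, ?_, ?_⟩
      · obtain rfl : t = 1 - s := by linarith
        nlinarith [mul_nonneg ha.le (mul_nonneg (mul_nonneg hs ht) (sq_nonneg (x1 - y1))),
          mul_le_mul_of_nonneg_left hx2 hs, mul_le_mul_of_nonneg_left hy2 ht]
      · nlinarith [mul_le_mul_of_nonneg_left hx3 hs, mul_le_mul_of_nonneg_left hy3 ht]
  · rintro ⟨f, p⟩ ⟨h0, h1, h2, h3⟩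
    simp only [Set.mem_setOf_eq] at h0 h1 h2 h3
    set y1 : ℝ := (a * f ^ 2 + b * f) / eta with hy1
    set yc : ℝ := ((a * fb + b) * f) / eta with hyc
    set yb : ℝ := (a * fb ^ 2 + b * fb) / eta with hyb
    have hP1 : (f, y1) ∈ S := by
      refine ⟨h0, h1, ?_⟩
      simp only [hy1]
      field_simp
    have hP2 : ((0 : ℝ), (0 : ℝ)) ∈ S := ⟨le_refl 0, hfb.le, by norm_num⟩
    have hP3 : (fb, yb) ∈ S := by
      refine ⟨hfb.le, le_refl _, ?_⟩
      simp only [hyb]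
      field_simp
    have hC : ((f : ℝ), yc) ∈ convexHull ℝ S := by
      have hmem := (convex_convexHull ℝ S) (subset_convexHull ℝ S hP2)
        (subset_convexHull ℝ S hP3) (a := 1 - f / fb) (b := f / fb)
        (by have : f / fb ≤ 1 := (div_le_one hfb).mpr h1; linarith)
        (div_nonneg h0 hfb.le) (by ring)
      have heq : (1 - f / fb) • ((0 : ℝ), (0 : ℝ)) + (f / fb) • ((fb : ℝ), yb)
          = ((f : ℝ), yc) := by
        simp only [Prod.smul_mk, Prod.mk_add_mk, smul_eq_mul, Prod.ext_iff]
        constructor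
        · field_simp
          ring
        · simp only [hyb, hyc]
          field_simp
          ring
      rwa [heq] at hmem
    have hle1 : y1 ≤ p := by
      rw [hy1, div_le_iff₀ heta]
      nlinarith
    have hle2 : p ≤ yc := by
      rw [hyc, le_div_iff₀ heta]
      nlinarith
    rcases eq_or_lt_of_le (hle1.trans hle2) with heqc | hlt
    · have hp : p = y1 := le_antisymm (by linarith) hle1
      rw [hp]
      exact subset_convexHull ℝ S hP1
    · set u : ℝ := (yc - p) / (yc - y1) with hu
      set v : ℝ := (p - y1) / (yc - y1) with hv
      have hd : 0 < yc - y1 := by linarith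
      have hu0 : 0 ≤ u := div_nonneg (by linarith) hd.le
      have hv0 : 0 ≤ v := div_nonneg (by linarith) hd.le
      have huv : u + v = 1 := by
        rw [hu, hv]
        field_simp
        ring
      have hmem := (convex_convexHull ℝ S) (subset_convexHull ℝ S hP1) hC hu0 hv0 huv
      have heq : u • ((f : ℝ), y1) + v • ((f : ℝ), yc) = ((f : ℝ), p) := by
        simp only [Prod.smul_mk, Prod.mk_add_mk, smul_eq_mul, Prod.ext_iff]
        constructor
        · nlinarith [huv]
        · rw [hu, hv]
          field_simp
          ring
      rwa [heq] at hmem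
end

section
/- Let R > 0 and f̄ > 0. For every real f with f ≤ f̄, the signed-square head-loss value satisfies R·f·|f| ≤ (2√2 − 2)·R·f̄·f + (3 − 2√2)·R·f̄². Moreover, equality holds exactly at f = f̄ and at f = (1 − √2)·f̄. -/
/-- Upper edge of the quasi-convex hull of the Darcy–Weisbach curve y = R·f·|f|:
for f ≤ f̄, R·f·|f| ≤ (2√2 − 2)·R·f̄·f + (3 − 2√2)·R·f̄², with equality
exactly at f = f̄ and f = (1 − √2)·f̄. -/
theorem darcy_upper_edge (R fb : ℝ) (hR : 0 < R) (hfb : 0 < fb) :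
    ∀ f : ℝ, f ≤ fb →
      (R * f * |f| ≤ (2 * Real.sqrt 2 - 2) * R * fb * f
        + (3 - 2 * Real.sqrt 2) * R * fb ^ 2 ∧
      (R * f * |f| = (2 * Real.sqrt 2 - 2) * R * fb * f
        + (3 - 2 * Real.sqrt 2) * R * fb ^ 2 ↔
        f = fb ∨ f = (1 - Real.sqrt 2) * fb)) := by
  intro f hf
  have hs : Real.sqrt 2 ^ 2 = 2 := Real.sq_sqrt (by norm_num)
  have hsn : 0 ≤ Real.sqrt 2 := Real.sqrt_nonneg 2
  have hs1 : 1 < Real.sqrt 2 := by nlinarith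
  have hs2 : Real.sqrt 2 < 3 / 2 := by nlinarith
  set s := Real.sqrt 2 with hsdef
  rcases le_or_gt 0 f with h0 | h0
  · rw [abs_of_nonneg h0]
    have hpos : 0 ≤ f + (3 - 2 * s) * fb := by nlinarith
    constructor
    · nlinarith [mul_nonneg (mul_nonneg hR.le (sub_nonneg.2 hf)) hpos]
    · constructor
      · intro h
        left
        have key : R * ((fb - f) * (f + (3 - 2 * s) * fb)) = 0 := by
          linear_combination -h
        have key2 : (fb - f) * (f + (3 - 2 * s) * fb) = 0 := by
          rcases mul_eq_zero.1 key with h' | h'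
          · exact absurd h' hR.ne'
          · exact h'
        rcases mul_eq_zero.1 key2 with h' | h'
        · linarith
        · nlinarith
      · rintro (rfl | h)
        · ring
        · have : f < 0 := by rw [h]; nlinarith
          linarith
  · rw [abs_of_neg h0]
    constructor
    · have key : (2 * s - 2) * R * fb * f + (3 - 2 * s) * R * fb ^ 2 - R * f * (-f)
          = R * (f + (s - 1) * fb) ^ 2 := by
        linear_combination (-(R * fb ^ 2)) * hs
      linarith [mul_nonneg hR.le (sq_nonneg (f + (s - 1) * fb))]
    · constructor
      · intro h
        right
        have key : R * (f + (s - 1) * fb) ^ 2 = 0 := by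
          linear_combination -h + R * fb ^ 2 * hs
        have key2 : (f + (s - 1) * fb) ^ 2 = 0 := by
          rcases mul_eq_zero.1 key with h' | h'
          · exact absurd h' hR.ne'
          · exact h'
        have := pow_eq_zero_iff (n := 2) (by norm_num) |>.1 key2
        linarith
      · rintro (rfl | h)
        · linarith
        · rw [h]
          linear_combination (R * fb ^ 2) * hs
end

section
/- Let R > 0, f̄ > 0, and f̲ ∈ ℝ with −(1 + √2)·f̄ ≤ f̲ ≤ 0. For every f ∈ [f̲, f̄], the signed-square head-loss value satisfies R·f·|f| ≥ 2·R·f̄·f − R·f̄². -/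
/-- The tangent line to y = R·f² at the upper flow bound f̄ is a lower edge of the
quasi-convex hull of the Darcy–Weisbach curve y = R·f·|f| on [f̲, f̄],
provided −(1 + √2)·f̄ ≤ f̲ ≤ 0. -/
theorem darcy_tangent_lower_edge (R fu fl : ℝ) (hR : 0 < R) (hfu : 0 < fu)
    (hfl1 : -(1 + Real.sqrt 2) * fu ≤ fl) (hfl2 : fl ≤ 0) :
    ∀ f : ℝ, fl ≤ f → f ≤ fu →
      R * f * |f| ≥ 2 * R * fu * f - R * fu ^ 2 := by
  intro f hlo hhi
  have h2 : Real.sqrt 2 ^ 2 = 2 := Real.sq_sqrt (by norm_num)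
  have h2pos : (0:ℝ) < Real.sqrt 2 := Real.sqrt_pos.mpr (by norm_num)
  rcases le_or_gt 0 f with hf | hf
  · rw [abs_of_nonneg hf]
    nlinarith [sq_nonneg (f - fu)]
  · rw [abs_of_neg hf]
    have hge : -(1 + Real.sqrt 2) * fu ≤ f := le_trans hfl1 hlo
    have hneg : 0 ≤ -(f + (1 - Real.sqrt 2) * fu) := by nlinarith
    have key : 0 ≤ fu ^ 2 - 2 * fu * f - f ^ 2 := by
      nlinarith [mul_nonneg (sub_nonneg.mpr hge) hneg, sq_nonneg fu]
    nlinarith [mul_nonneg hR.le key]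
end

section
/- Let S̄ > 0, Ī > 0, and voltage bounds 0 < V̲ ≤ V̄ satisfy S̄² ≤ V̲·Ī. Then the convex hull of the set {(P,Q,V,I) ∈ ℝ⁴ : P² + Q² = V·I, P² + Q² ≤ S̄², V̲ ≤ V ≤ V̄, 0 ≤ I ≤ Ī} equals the set {(P,Q,V,I) ∈ ℝ⁴ : P² + Q² ≤ V·I, S̄²·V + V̲·V̄·I ≤ S̄²·(V̲ + V̄), P² + Q² ≤ S̄², V̲ ≤ V ≤ V̄, 0 ≤ I ≤ Ī}. -/
lemma distflow_pair (Sb Ib Vl Vu : ℝ) (hVl : 0 < Vl)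
    (P Q V I : ℝ) (hle : P ^ 2 + Q ^ 2 ≤ V * I) (hS : V * I ≤ Sb ^ 2)
    (h3 : Vl ≤ V) (h4 : V ≤ Vu) (h5 : 0 ≤ I) (h6 : I ≤ Ib) :
    (P, Q, V, I) ∈ convexHull ℝ
      {x : ℝ × ℝ × ℝ × ℝ |
        x.1 ^ 2 + x.2.1 ^ 2 = x.2.2.1 * x.2.2.2 ∧
        x.1 ^ 2 + x.2.1 ^ 2 ≤ Sb ^ 2 ∧
        Vl ≤ x.2.2.1 ∧ x.2.2.1 ≤ Vu ∧ 0 ≤ x.2.2.2 ∧ x.2.2.2 ≤ Ib} := by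
  set T : Set (ℝ × ℝ × ℝ × ℝ) :=
    {x : ℝ × ℝ × ℝ × ℝ |
        x.1 ^ 2 + x.2.1 ^ 2 = x.2.2.1 * x.2.2.2 ∧
        x.1 ^ 2 + x.2.1 ^ 2 ≤ Sb ^ 2 ∧
        Vl ≤ x.2.2.1 ∧ x.2.2.1 ≤ Vu ∧ 0 ≤ x.2.2.2 ∧ x.2.2.2 ≤ Ib} with hT
  have hVpos : 0 < V := lt_of_lt_of_le hVl h3
  by_cases hI : I = 0
  · subst hI
    have hP : P = 0 := by nlinarith [sq_nonneg P, sq_nonneg Q]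
    have hQ : Q = 0 := by nlinarith [sq_nonneg P, sq_nonneg Q]
    apply subset_convexHull
    refine ⟨by simp [hP, hQ], by nlinarith [sq_nonneg P, sq_nonneg Q], h3, h4, le_refl _, h6⟩
  · have hIpos : 0 < I := lt_of_le_of_ne h5 (Ne.symm hI)
    have hVI : 0 < V * I := mul_pos hVpos hIpos
    set r := Real.sqrt (V * I) with hrdef
    have hr2 : r ^ 2 = V * I := Real.sq_sqrt hVI.le
    have hrpos : 0 < r := Real.sqrt_pos.mpr hVI
    by_cases hs : P ^ 2 + Q ^ 2 = 0
    · have hP : P = 0 := by nlinarith [sq_nonneg P, sq_nonneg Q]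
      have hQ : Q = 0 := by nlinarith [sq_nonneg P, sq_nonneg Q]
      have hy : ((r, 0, V, I) : ℝ × ℝ × ℝ × ℝ) ∈ T :=
        ⟨by simpa using hr2, by simpa using hr2.le.trans hS, h3, h4, h5, h6⟩
      have hz : ((-r, 0, V, I) : ℝ × ℝ × ℝ × ℝ) ∈ T :=
        ⟨by simpa using hr2, by simpa using hr2.le.trans hS, h3, h4, h5, h6⟩
      have hmem := (convex_convexHull ℝ T) (subset_convexHull ℝ T hy)
        (subset_convexHull ℝ T hz) (by norm_num : (0:ℝ) ≤ 1/2)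
        (by norm_num : (0:ℝ) ≤ 1/2) (by norm_num)
      have hexp : (P, Q, V, I) =
          (1/2 : ℝ) • ((r, 0, V, I) : ℝ × ℝ × ℝ × ℝ) + (1/2 : ℝ) • (-r, 0, V, I) := by
        simp only [Prod.smul_mk, Prod.mk_add_mk, smul_eq_mul, Prod.mk.injEq]
        refine ⟨by rw [hP]; ring, by rw [hQ]; ring, by ring, by ring⟩
      rw [hexp]; exact hmem
    · have hspos : 0 < P ^ 2 + Q ^ 2 :=
        lt_of_le_of_ne (by positivity) (Ne.symm hs)
      set q := Real.sqrt (P ^ 2 + Q ^ 2) with hqdef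
      have hq2 : q ^ 2 = P ^ 2 + Q ^ 2 := Real.sq_sqrt hspos.le
      have hqpos : 0 < q := Real.sqrt_pos.mpr hspos
      have hqr : q ≤ r := Real.sqrt_le_sqrt hle
      set k := r / q with hkdef
      have hk1 : 1 ≤ k := (one_le_div hqpos).mpr hqr
      have hkpos : 0 < k := lt_of_lt_of_le one_pos hk1
      have hval : (k * P) ^ 2 + (k * Q) ^ 2 = V * I := by
        have h1 : (k * P) ^ 2 + (k * Q) ^ 2 = k ^ 2 * (P ^ 2 + Q ^ 2) := by ring
        rw [h1, hkdef, div_pow, hq2, hr2]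
        field_simp
      have hy : ((k * P, k * Q, V, I) : ℝ × ℝ × ℝ × ℝ) ∈ T :=
        ⟨hval, hval.le.trans hS, h3, h4, h5, h6⟩
      have hz : ((-(k * P), -(k * Q), V, I) : ℝ × ℝ × ℝ × ℝ) ∈ T :=
        ⟨by simpa using hval, by simpa using hval.le.trans hS, h3, h4, h5, h6⟩
      set a := (1 + 1/k)/2 with hadef
      set b := (1 - 1/k)/2 with hbdef
      have hinv : 1/k ≤ 1 := by rw [div_le_one hkpos]; exact hk1
      have ha : 0 ≤ a := by positivity
      have hb : 0 ≤ b := by rw [hbdef]; linarith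
      have hab : a + b = 1 := by rw [hadef, hbdef]; ring
      have hab2 : a - b = 1/k := by rw [hadef, hbdef]; ring
      have hmem := (convex_convexHull ℝ T) (subset_convexHull ℝ T hy)
        (subset_convexHull ℝ T hz) ha hb hab
      have hexp : (P, Q, V, I) =
          a • ((k * P, k * Q, V, I) : ℝ × ℝ × ℝ × ℝ) + b • (-(k * P), -(k * Q), V, I) := by
        simp only [Prod.smul_mk, Prod.mk_add_mk, smul_eq_mul, Prod.mk.injEq]
        have e1 : a * (k * P) + b * -(k * P) = ((a - b) * k) * P := by ring
        have e2 : a * (k * Q) + b * -(k * Q) = ((a - b) * k) * Q := by ring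
        have e3 : (a - b) * k = 1 := by rw [hab2]; field_simp
        refine ⟨by rw [e1, e3, one_mul], by rw [e2, e3, one_mul], ?_, ?_⟩
        · rw [← add_mul, hab, one_mul]
        · rw [← add_mul, hab, one_mul]
      rw [hexp]; exact hmem

lemma distflow_combo (e c I : ℝ) (hne : c - e ≠ 0) :
    (c - I) / (c - e) * e + (1 - (c - I) / (c - e)) * c = I := by
  field_simp
  ring

set_option maxHeartbeats 1000000 in
/-- Convex hull of the DistFlow branch constraint P² + Q² = V·I with the
apparent-power, voltage, and current bounds (case S̄² ≤ V̲·Ī). -/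
theorem distflow_convexHull (Sb Ib Vl Vu : ℝ)
    (hSb : 0 < Sb) (hIb : 0 < Ib) (hVl : 0 < Vl) (hV : Vl ≤ Vu)
    (hcase : Sb ^ 2 ≤ Vl * Ib) :
    convexHull ℝ
      {x : ℝ × ℝ × ℝ × ℝ |
        x.1 ^ 2 + x.2.1 ^ 2 = x.2.2.1 * x.2.2.2 ∧
        x.1 ^ 2 + x.2.1 ^ 2 ≤ Sb ^ 2 ∧
        Vl ≤ x.2.2.1 ∧ x.2.2.1 ≤ Vu ∧ 0 ≤ x.2.2.2 ∧ x.2.2.2 ≤ Ib} =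
      {x : ℝ × ℝ × ℝ × ℝ |
        x.1 ^ 2 + x.2.1 ^ 2 ≤ x.2.2.1 * x.2.2.2 ∧
        Sb ^ 2 * x.2.2.1 + Vl * Vu * x.2.2.2 ≤ Sb ^ 2 * (Vl + Vu) ∧
        x.1 ^ 2 + x.2.1 ^ 2 ≤ Sb ^ 2 ∧
        Vl ≤ x.2.2.1 ∧ x.2.2.1 ≤ Vu ∧ 0 ≤ x.2.2.2 ∧ x.2.2.2 ≤ Ib} := by
  apply Set.Subset.antisymm
  · -- convexHull S ⊆ RHS
    apply convexHull_min
    · rintro ⟨P, Q, V, I⟩ ⟨h1, h2, h3, h4, h5, h6⟩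
      simp only [Set.mem_setOf_eq] at *
      have hVI : V * I ≤ Sb ^ 2 := h1 ▸ h2
      refine ⟨le_of_eq h1, ?_, h2, h3, h4, h5, h6⟩
      -- Sb²V + VlVu I ≤ Sb²(Vl+Vu)
      nlinarith [mul_nonneg (sub_nonneg.mpr h4) (sub_nonneg.mpr (show Vl * I ≤ Sb ^ 2 by nlinarith)),
        mul_nonneg hVl.le (sub_nonneg.mpr hVI)]
    · -- RHS convex
      rintro ⟨P1, Q1, V1, I1⟩ ⟨h1, h2, h3, h4, h5, h6, h7⟩
        ⟨P2, Q2, V2, I2⟩ ⟨g1, g2, g3, g4, g5, g6, g7⟩ a b ha hb hab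
      simp only [Set.mem_setOf_eq] at *
      obtain rfl : b = 1 - a := by linarith
      have ha1 : a ≤ 1 := by linarith
      simp only [Prod.smul_mk, Prod.mk_add_mk, smul_eq_mul]
      have hV1 : 0 < V1 := lt_of_lt_of_le hVl h4
      have hV2 : 0 < V2 := lt_of_lt_of_le hVl g4
      have hcross : 2 * (P1 * P2 + Q1 * Q2) ≤ V1 * I2 + V2 * I1 := by
        have hh : V1 * V2 * (V1 * I2 + V2 * I1 - 2 * (P1 * P2 + Q1 * Q2)) ≥ 0 := by
          nlinarith [sq_nonneg (V1 * P2 - V2 * P1), sq_nonneg (V1 * Q2 - V2 * Q1),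
            mul_nonneg (sq_nonneg V1) (sub_nonneg.mpr g1),
            mul_nonneg (sq_nonneg V2) (sub_nonneg.mpr h1)]
        nlinarith [mul_pos hV1 hV2]
      constructor
      · nlinarith [mul_nonneg (mul_nonneg ha hb) (sub_nonneg.mpr hcross),
          mul_nonneg (mul_nonneg ha ha) (sub_nonneg.mpr h1),
          mul_nonneg (mul_nonneg hb hb) (sub_nonneg.mpr g1)]
      refine ⟨?_, ?_, ?_, ?_, ?_, ?_⟩
      · nlinarith [mul_le_mul_of_nonneg_left h2 ha, mul_le_mul_of_nonneg_left g2 hb]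
      · nlinarith [mul_nonneg (mul_nonneg ha hb) (sq_nonneg (P1 - P2)),
          mul_nonneg (mul_nonneg ha hb) (sq_nonneg (Q1 - Q2)),
          mul_le_mul_of_nonneg_left h3 (mul_nonneg ha ha),
          mul_le_mul_of_nonneg_left g3 (mul_nonneg hb hb),
          mul_nonneg (mul_nonneg ha hb) (sub_nonneg.mpr h3),
          mul_nonneg (mul_nonneg ha hb) (sub_nonneg.mpr g3)]
      · nlinarith [mul_le_mul_of_nonneg_left h4 ha, mul_le_mul_of_nonneg_left g4 hb]
      · nlinarith [mul_le_mul_of_nonneg_left h5 ha, mul_le_mul_of_nonneg_left g5 hb]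
      · exact add_nonneg (mul_nonneg ha h6) (mul_nonneg hb g6)
      · nlinarith [mul_le_mul_of_nonneg_left h7 ha, mul_le_mul_of_nonneg_left g7 hb]
  · -- RHS ⊆ convexHull S
    rintro ⟨P, Q, V, I⟩ ⟨h1, h2, h3, h4, h5, h6, h7⟩
    simp only [Set.mem_setOf_eq] at *
    have hVpos : 0 < V := lt_of_lt_of_le hVl h4
    by_cases hB : V * I ≤ Sb ^ 2
    · exact distflow_pair Sb Ib Vl Vu hVl P Q V I h1 hB h4 h5 h6 h7
    · push_neg at hB
      have hVuPos : 0 < Vu := lt_of_lt_of_le hVl hV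
      have hVlu : Vl < Vu := by
        rcases lt_or_eq_of_le hV with h | h
        · exact h
        · exfalso; subst h
          have hVV : V = Vl := le_antisymm h5 h4
          rw [hVV] at hB
          nlinarith [mul_lt_mul_of_pos_left hB hVl]
      set T : Set (ℝ × ℝ × ℝ × ℝ) :=
        {x : ℝ × ℝ × ℝ × ℝ |
          x.1 ^ 2 + x.2.1 ^ 2 = x.2.2.1 * x.2.2.2 ∧
          x.1 ^ 2 + x.2.1 ^ 2 ≤ Sb ^ 2 ∧
          Vl ≤ x.2.2.1 ∧ x.2.2.1 ≤ Vu ∧ 0 ≤ x.2.2.2 ∧ x.2.2.2 ≤ Ib} with hT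
      -- the three hyperbola points
      have hIbV : Sb ^ 2 / V ≤ Ib := by
        rw [div_le_iff₀ hVpos]; nlinarith
      have hIbVl : Sb ^ 2 / Vl ≤ Ib := by
        rw [div_le_iff₀ hVl]; nlinarith
      have hIbVu : Sb ^ 2 / Vu ≤ Ib := by
        rw [div_le_iff₀ hVuPos]; nlinarith
      have hA : ((P, Q, V, Sb ^ 2 / V) : ℝ × ℝ × ℝ × ℝ) ∈ convexHull ℝ T := by
        apply distflow_pair Sb Ib Vl Vu hVl P Q V _ (by rw [mul_div_cancel₀ _ hVpos.ne']; exact h3)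
          (by rw [mul_div_cancel₀ _ hVpos.ne']) h4 h5 (div_nonneg (by positivity) hVpos.le) hIbV
      have hB1 : ((P, Q, Vl, Sb ^ 2 / Vl) : ℝ × ℝ × ℝ × ℝ) ∈ convexHull ℝ T := by
        apply distflow_pair Sb Ib Vl Vu hVl P Q Vl _ (by rw [mul_div_cancel₀ _ hVl.ne']; exact h3)
          (by rw [mul_div_cancel₀ _ hVl.ne']) (le_refl _) hV (div_nonneg (by positivity) hVl.le) hIbVl
      have hB2 : ((P, Q, Vu, Sb ^ 2 / Vu) : ℝ × ℝ × ℝ × ℝ) ∈ convexHull ℝ T := by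
        apply distflow_pair Sb Ib Vl Vu hVl P Q Vu _ (by rw [mul_div_cancel₀ _ hVuPos.ne']; exact h3)
          (by rw [mul_div_cancel₀ _ hVuPos.ne']) hV (le_refl _) (div_nonneg (by positivity) hVuPos.le) hIbVu
      -- weights
      set lam := (Vu - V) / (Vu - Vl) with hlam
      have hlu : 0 < Vu - Vl := by linarith
      have hlam0 : 0 ≤ lam := div_nonneg (by linarith) hlu.le
      have hlam1 : lam ≤ 1 := by
        rw [hlam, div_le_one hlu]; linarith
      set Ich := Sb ^ 2 * (Vl + Vu - V) / (Vl * Vu) with hIch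
      have hIchord : I ≤ Ich := by
        rw [hIch, le_div_iff₀ (by positivity)]; nlinarith
      have hIarc : Sb ^ 2 / V < I := by
        rw [div_lt_iff₀ hVpos]; nlinarith
      have hd : 0 < Ich - Sb ^ 2 / V := by linarith
      set mu := (Ich - I) / (Ich - Sb ^ 2 / V) with hmu
      have hmu0 : 0 ≤ mu := by
        apply div_nonneg (by linarith) hd.le
      have hmu1 : mu ≤ 1 := by
        rw [hmu, div_le_one hd]; linarith
      -- inner combination
      have hmid := (convex_convexHull ℝ T) hB1 hB2 hlam0 (by linarith : (0:ℝ) ≤ 1 - lam)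
        (by ring)
      have hfin := (convex_convexHull ℝ T) hA hmid hmu0 (by linarith : (0:ℝ) ≤ 1 - mu)
        (by ring)
      have hexp : ((P, Q, V, I) : ℝ × ℝ × ℝ × ℝ) =
          mu • ((P, Q, V, Sb ^ 2 / V) : ℝ × ℝ × ℝ × ℝ) +
          (1 - mu) • (lam • ((P, Q, Vl, Sb ^ 2 / Vl) : ℝ × ℝ × ℝ × ℝ) +
            (1 - lam) • ((P, Q, Vu, Sb ^ 2 / Vu) : ℝ × ℝ × ℝ × ℝ)) := by
        simp only [Prod.smul_mk, Prod.mk_add_mk, smul_eq_mul, Prod.mk.injEq]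
        refine ⟨by ring, by ring, ?_, ?_⟩
        · -- V component
          have hlV : lam * Vl + (1 - lam) * Vu = V := by
            rw [hlam]; field_simp; ring
          have : mu * V + (1 - mu) * (lam * Vl + (1 - lam) * Vu) = V := by
            rw [hlV]; ring
          linarith [this]
        · -- I component
          have hlI : lam * (Sb ^ 2 / Vl) + (1 - lam) * (Sb ^ 2 / Vu) = Ich := by
            rw [hlam, hIch]; field_simp; ring
          have hmuI : mu * (Sb ^ 2 / V) + (1 - mu) * Ich = I := by
            rw [hmu]; exact distflow_combo (Sb ^ 2 / V) Ich I hd.ne'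
          rw [hlI]; linarith [hmuI]
      rw [hexp]; exact hfin
end
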